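/- Suppose G satisfies the curvature-dimension inequality CD(m,κ) and f : V → ℝ satisfies −Δf(x) = λ f(x) for all x ∈ V. Then for every real number α and every vertex x ∈ V, −Δ(|∇f|² + α λ f²)(x) ≤ (2λ − αλ − 2κ) |∇f|²(x) + (2α − 4/m) λ² f²(x). -/
import Mathlib


open Finset

/-- The weighted degree `d(x) = Σ_y w(x,y)`. -/
noncomputable def deg {V : Type*} [Fintype V] (w : V → V → ℝ) (x : V) : ℝ :=
  ∑ y, w x y

/-- The graph Laplacian `Δf(x) = (1/d(x)) Σ_y w(x,y) (f(y) − f(x))`. -/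
noncomputable def lap {V : Type*} [Fintype V] (w : V → V → ℝ) (f : V → ℝ) (x : V) : ℝ :=
  (1 / deg w x) * ∑ y, w x y * (f y - f x)

/-- The bilinear operator `Γ(f,g)(x) = (1/2)(Δ(fg)(x) − f(x)Δg(x) − g(x)Δf(x))`. -/
noncomputable def gam {V : Type*} [Fintype V] (w : V → V → ℝ) (f g : V → ℝ) (x : V) : ℝ :=
  (1 / 2) * (lap w (fun y => f y * g y) x - f x * lap w g x - g x * lap w f x)

/-- The curvature operator `Γ₂(f,g)(x) = (1/2)(ΔΓ(f,g)(x) − Γ(f,Δg)(x) − Γ(g,Δf)(x))`. -/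
noncomputable def gam2 {V : Type*} [Fintype V] (w : V → V → ℝ) (f g : V → ℝ) (x : V) : ℝ :=
  (1 / 2) * (lap w (gam w f g) x - gam w f (lap w g) x - gam w g (lap w f) x)

/-- The gradient square `|∇f|²(x) = (1/d(x)) Σ_y w(x,y) (f(x) − f(y))²`. -/
noncomputable def gradsq {V : Type*} [Fintype V] (w : V → V → ℝ) (f : V → ℝ) (x : V) : ℝ :=
  (1 / deg w x) * ∑ y, w x y * (f x - f y) ^ 2

/-- The curvature-dimension inequality `CD(m,κ)`. -/
def CD {V : Type*} [Fintype V] (w : V → V → ℝ) (m κ : ℝ) : Prop :=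
  ∀ (f : V → ℝ) (x : V), gam2 w f f x ≥ (1 / m) * (lap w f x) ^ 2 + κ * gam w f f x


lemma lap_linear {V : Type*} [Fintype V] (w : V → V → ℝ) (g h : V → ℝ) (a b : ℝ) (x : V) :
    lap w (fun y => a * g y + b * h y) x = a * lap w g x + b * lap w h x := by
  unfold lap
  have key : ∑ y, w x y * ((a * g y + b * h y) - (a * g x + b * h x))
      = a * ∑ y, w x y * (g y - g x) + b * ∑ y, w x y * (h y - h x) := by
    rw [Finset.mul_sum, Finset.mul_sum, ← Finset.sum_add_distrib]
    exact Finset.sum_congr rfl fun y _ => by ring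
  rw [key]; ring

lemma lap_smul {V : Type*} [Fintype V] (w : V → V → ℝ) (g : V → ℝ) (c : ℝ) (x : V) :
    lap w (fun y => c * g y) x = c * lap w g x := by
  have := lap_linear w g g c 0 x
  simp only [zero_mul, add_zero] at this
  exact this

lemma gam_self {V : Type*} [Fintype V] (w : V → V → ℝ) (f : V → ℝ) (x : V) :
    gam w f f x = (1 / 2) * gradsq w f x := by
  unfold gam lap gradsq
  have key : ∑ y, w x y * (f y * f y - f x * f x)
      = (∑ y, w x y * (f x - f y) ^ 2) + f x * (∑ y, w x y * (f y - f x))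
        + f x * (∑ y, w x y * (f y - f x)) := by
    simp only [Finset.mul_sum]
    rw [← Finset.sum_add_distrib, ← Finset.sum_add_distrib]
    exact Finset.sum_congr rfl fun y _ => by ring
  rw [key]; ring

lemma gam_smul_right {V : Type*} [Fintype V] (w : V → V → ℝ) (f g : V → ℝ) (c : ℝ) (x : V) :
    gam w f (fun y => c * g y) x = c * gam w f g x := by
  unfold gam
  have h1 : (fun y => f y * (c * g y)) = (fun y => c * (f y * g y)) := funext fun y => by ring
  rw [h1, lap_smul, lap_smul]; ring

theorem lap_combination_bound {V : Type*} [Fintype V] (w : V → V → ℝ)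
    (hsymm : ∀ x y, w x y = w y x) (hnonneg : ∀ x y, 0 ≤ w x y)
    (hloop : ∀ x, w x x = 0) (hdeg : ∀ x, 0 < deg w x)
    (m κ : ℝ) (hm : 0 < m) (hCD : CD w m κ)
    (lam : ℝ) (f : V → ℝ) (hf : ∀ x, -lap w f x = lam * f x)
    (α : ℝ) (x : V) :
    -lap w (fun y => gradsq w f y + α * lam * f y ^ 2) x ≤
      (2 * lam - α * lam - 2 * κ) * gradsq w f x + (2 * α - 4 / m) * lam ^ 2 * f x ^ 2 := by
  have hlf : lap w f = fun y => (-lam) * f y := funext fun y => by have := hf y; linarith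
  have hgam : ∀ z, gam w f f z = (1 / 2) * gradsq w f z := fun z => gam_self w f z
  have htarget : lap w (fun y => gradsq w f y + α * lam * f y ^ 2) x
      = 2 * lap w (gam w f f) x + (α * lam) * lap w (fun y => f y ^ 2) x := by
    have hfun : (fun y => gradsq w f y + α * lam * f y ^ 2)
        = (fun y => 2 * gam w f f y + (α * lam) * (fun z => f z ^ 2) y) :=
      funext fun y => by rw [hgam y]; ring
    rw [hfun, lap_linear]
  have hlfx : lap w f x = -lam * f x := congrFun hlf x
  have hlapf2 : lap w (fun y => f y ^ 2) x = gradsq w f x - 2 * lam * f x ^ 2 := by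
    have h := hgam x
    unfold gam at h
    have h2 : lap w (fun y => f y * f y) x = lap w (fun y => f y ^ 2) x := by
      congr 1; funext y; ring
    rw [h2, hlfx] at h
    nlinarith [h]
  have hgamlap : gam w f (lap w f) x = -lam * gam w f f x := by
    rw [hlf]; exact gam_smul_right w f f (-lam) x
  have hgam2 : gam2 w f f x = (1 / 2) * lap w (gam w f f) x + lam * gam w f f x := by
    unfold gam2; rw [hgamlap]; ring
  have hCDx := hCD f x
  rw [hgam2, hgam x, hlfx] at hCDx
  have h4 : (2 * α - 4 / m) * lam ^ 2 * f x ^ 2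
      = 2 * α * lam ^ 2 * f x ^ 2 - 4 * (1 / m) * (lam ^ 2 * f x ^ 2) := by ring
  rw [htarget, hlapf2, h4]
  nlinarith [hCDx]
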